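/- Let S = a₀·Id + a₁·T act on a spinor ψ in the eigenspace Σ_± = {ψ : T·ψ = ±||T||·ψ} of a 3-form T in dimension 4 with T proportional to e₁∧e₂∧e₃. Then Σ_{i=1}^{4} ||(e_i·S + S·e_i)ψ||² = 4[3(a₀ ± a₁||T||)² + a₀²]·||ψ||². -/

import Mathlib

/-- on a module over Cl(4) with skew-adjoint Clifford multiplication,
for T = t·e₁e₂e₃, S = a₀·Id + a₁·T and a spinor ψ with T·ψ = ±‖T‖·ψ (‖T‖ = |t|),
one has Σ_{i=1}^{4} ‖(eᵢ·S + S·eᵢ)ψ‖² = 4[3(a₀ ± a₁‖T‖)² + a₀²]·‖ψ‖². -/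
theorem stmt_6 {H : Type*} [NormedAddCommGroup H] [InnerProductSpace ℂ H]
    (c : Fin 4 → (H →ₗ[ℂ] H))
    (hrel : ∀ i j : Fin 4, c i ∘ₗ c j + c j ∘ₗ c i
      = if i = j then (-2 : ℂ) • (LinearMap.id : H →ₗ[ℂ] H) else 0)
    (hskew : ∀ (i : Fin 4) (φ ψ : H), (inner ℂ (c i φ) ψ : ℂ) = -(inner ℂ φ (c i ψ) : ℂ))
    (t a₀ a₁ : ℝ) (Top S : H →ₗ[ℂ] H)
    (hTop : Top = ((t : ℝ) : ℂ) • (c 0 ∘ₗ c 1 ∘ₗ c 2))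
    (hS : S = ((a₀ : ℝ) : ℂ) • (LinearMap.id : H →ₗ[ℂ] H) + ((a₁ : ℝ) : ℂ) • Top)
    (ε : ℝ) (hε : ε = 1 ∨ ε = -1)
    (ψ : H) (hψ : Top ψ = ((ε * |t| : ℝ) : ℂ) • ψ) :
    ∑ i : Fin 4, ‖(c i ∘ₗ S + S ∘ₗ c i) ψ‖^2
      = 4 * (3 * (a₀ + ε * a₁ * |t|)^2 + a₀^2) * ‖ψ‖^2 := by
  -- anticommutation pointwise
  have hA : ∀ i j : Fin 4, i ≠ j → ∀ x : H, c i (c j x) = - c j (c i x) := by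
    intro i j hij x
    have h := DFunLike.congr_fun (hrel i j) x
    rw [if_neg hij] at h
    simp only [LinearMap.add_apply, LinearMap.comp_apply, LinearMap.zero_apply] at h
    exact eq_neg_of_add_eq_zero_left h
  have hSq : ∀ (i : Fin 4) (x : H), c i (c i x) = -x := by
    intro i x
    have h := DFunLike.congr_fun (hrel i i) x
    rw [if_pos rfl] at h
    simp only [LinearMap.add_apply, LinearMap.comp_apply, LinearMap.smul_apply,
      LinearMap.id_apply] at h
    have h2 : (2 : ℂ) • c i (c i x) = (2 : ℂ) • (-x) := by
      rw [two_smul, h]; simp [neg_smul, smul_neg, two_smul]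
    exact smul_right_injective H two_ne_zero h2
  -- norm preservation
  have hnorm : ∀ (i : Fin 4) (x : H), ‖c i x‖ = ‖x‖ := by
    intro i x
    have h1 : (inner ℂ (c i x) (c i x) : ℂ) = inner ℂ x x := by
      rw [hskew i x (c i x), hSq i x, inner_neg_right, neg_neg]
    rw [inner_self_eq_norm_sq_to_K, inner_self_eq_norm_sq_to_K] at h1
    have h2 : (‖c i x‖ : ℝ) ^ 2 = ‖x‖ ^ 2 := by exact_mod_cast h1
    nlinarith [norm_nonneg (c i x), norm_nonneg x]
  have h10 := hA 1 0 (by decide)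
  have h20 := hA 2 0 (by decide)
  have h21 := hA 2 1 (by decide)
  have h30 := hA 3 0 (by decide)
  have h31 := hA 3 1 (by decide)
  have h32 := hA 3 2 (by decide)
  -- Top vs c i
  have hswap0 : ∀ x : H, Top (c 0 x) = c 0 (Top x) := by
    intro x
    rw [hTop]
    simp only [LinearMap.smul_apply, LinearMap.comp_apply, map_smul]
    congr 1
    simp only [h10, h20, h21, h30, h31, h32, hSq, map_neg, neg_neg]
  have hswap1 : ∀ x : H, Top (c 1 x) = c 1 (Top x) := by
    intro x
    rw [hTop]
    simp only [LinearMap.smul_apply, LinearMap.comp_apply, map_smul]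
    congr 1
    simp only [h10, h20, h21, h30, h31, h32, hSq, map_neg, neg_neg]
  have hswap2 : ∀ x : H, Top (c 2 x) = c 2 (Top x) := by
    intro x
    rw [hTop]
    simp only [LinearMap.smul_apply, LinearMap.comp_apply, map_smul]
    congr 1
    simp only [h10, h20, h21, h30, h31, h32, hSq, map_neg, neg_neg]
  have hswap3 : ∀ x : H, Top (c 3 x) = - c 3 (Top x) := by
    intro x
    rw [hTop]
    simp only [LinearMap.smul_apply, LinearMap.comp_apply, map_smul, smul_neg]
    rw [← smul_neg]
    congr 1
    simp only [h10, h20, h21, h30, h31, h32, hSq, map_neg, neg_neg]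
  -- the four terms
  have term0 : (c 0 ∘ₗ S + S ∘ₗ c 0) ψ = ((2 * (a₀ + ε * a₁ * |t|) : ℝ) : ℂ) • c 0 ψ := by
    simp only [hS, LinearMap.add_apply, LinearMap.comp_apply, LinearMap.smul_apply,
      LinearMap.id_apply, map_add, map_smul, hswap0, hψ]
    push_cast
    module
  have term1 : (c 1 ∘ₗ S + S ∘ₗ c 1) ψ = ((2 * (a₀ + ε * a₁ * |t|) : ℝ) : ℂ) • c 1 ψ := by
    simp only [hS, LinearMap.add_apply, LinearMap.comp_apply, LinearMap.smul_apply,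
      LinearMap.id_apply, map_add, map_smul, hswap1, hψ]
    push_cast
    module
  have term2 : (c 2 ∘ₗ S + S ∘ₗ c 2) ψ = ((2 * (a₀ + ε * a₁ * |t|) : ℝ) : ℂ) • c 2 ψ := by
    simp only [hS, LinearMap.add_apply, LinearMap.comp_apply, LinearMap.smul_apply,
      LinearMap.id_apply, map_add, map_smul, hswap2, hψ]
    push_cast
    module
  have term3 : (c 3 ∘ₗ S + S ∘ₗ c 3) ψ = ((2 * a₀ : ℝ) : ℂ) • c 3 ψ := by
    simp only [hS, LinearMap.add_apply, LinearMap.comp_apply, LinearMap.smul_apply,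
      LinearMap.id_apply, map_add, map_smul, hswap3, hψ]
    push_cast
    module
  rw [Fin.sum_univ_four, term0, term1, term2, term3]
  simp only [norm_smul, Complex.norm_real, Real.norm_eq_abs, mul_pow, sq_abs,
    hnorm]
  ring
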